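/- For every positive integer q, the weaving square W_{4q} satisfies: (i) the map (i,j) ↦ W_{4q}(i,j) is a bijection from [4q]×[4q] onto {1,2,…,16q²}; and (ii) for every i ∈ [4q], Σ_{j=1}^{4q} W_{4q}(i,j) = 32q³ + 2q and Σ_{j=1}^{4q} W_{4q}(j,i) = 32q³ + 2q (all row sums and all column sums equal 32q³ + 2q). -/
import Mathlib


namespace Weaving

/-- The four little squares of order `q`, as rotations of the basic square
`L⁰(i,j) = q(i−1)+j` by `0, π/2, π, 3π/2`; indices `i, j` range over `[1, q]`. -/
def littleSq (q : ℕ) : ℕ → ℕ → ℕ → ℕ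
  | 0, i, j => q * (i - 1) + j
  | 1, i, j => q * (q - j) + i
  | 2, i, j => q * (q - i) + (q + 1 - j)
  | _, i, j => q * (j - 1) + (q + 1 - i)

/-- The `4 × 4` base square `B` (1-based indices). -/
def baseSq : ℕ → ℕ → ℕ
  | 1, 1 => 1 | 1, 2 => 6 | 1, 3 => 11 | 1, 4 => 16
  | 2, 1 => 7 | 2, 2 => 4 | 2, 3 => 13 | 2, 4 => 10
  | 3, 1 => 12 | 3, 2 => 15 | 3, 3 => 2 | 3, 4 => 5
  | 4, 1 => 14 | 4, 2 => 9 | 4, 3 => 8 | 4, 4 => 3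
  | _, _ => 0

/-- The weaving square `W_{4q}` with 1-based indices `i, j ∈ [1, 4q]`:
writing `i = q(i₁−1)+i₂`, `j = q(j₁−1)+j₂` with `i₁, j₁ ∈ [4]` and `i₂, j₂ ∈ [q]`,
`W_{4q}(i,j) = (B(i₁,j₁)−1)·q² + L^{(j₁−i₁ mod 4)}(i₂,j₂)`. -/
def weaving (q : ℕ) (i j : ℕ) : ℕ :=
  let i₁ := (i - 1) / q + 1
  let i₂ := (i - 1) % q + 1
  let j₁ := (j - 1) / q + 1
  let j₂ := (j - 1) % q + 1
  (baseSq i₁ j₁ - 1) * q ^ 2 + littleSq q ((j₁ + 4 - i₁) % 4) i₂ j₂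

def IsAP1 (I : Finset ℕ) : Prop := ∃ a b : ℕ, a ≤ b ∧ I = Finset.Icc a b

end Weaving


namespace WeavingProof
open Weaving Finset

lemma unique_div {q x y x' y' : ℕ} (hy : y < q) (hy' : y' < q)
    (h : q * x + y = q * x' + y') : x = x' ∧ y = y' := by
  have hq : 0 < q := lt_of_le_of_lt (Nat.zero_le _) hy
  have h1 : x = x' := by
    have h2 := congrArg (· / q) h
    simpa [Nat.mul_add_div hq, Nat.div_eq_of_lt hy, Nat.div_eq_of_lt hy'] using h2
  subst h1
  exact ⟨rfl, by omega⟩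

lemma dec_comp {q a b : ℕ} (hq : 0 < q) (ha : 1 ≤ a) (hb1 : 1 ≤ b) (hb2 : b ≤ q) :
    (q*(a-1)+b-1)/q + 1 = a ∧ (q*(a-1)+b-1) % q + 1 = b := by
  have h : q*(a-1)+b-1 = q*(a-1)+(b-1) := by omega
  rw [h, Nat.mul_add_div hq, Nat.div_eq_of_lt (by omega), Nat.mul_add_mod,
    Nat.mod_eq_of_lt (by omega)]
  omega

lemma sum_Icc14 {M : Type*} [AddCommMonoid M] (f : ℕ → M) :
    ∑ a ∈ Icc 1 4, f a = f 1 + f 2 + f 3 + f 4 := by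
  rw [show (Icc (1:ℕ) 4) = {1,2,3,4} from rfl]
  simp [Finset.sum_insert, Finset.mem_insert, add_assoc]

lemma sum_reindex {q : ℕ} (hq : 0 < q) (f : ℕ → ℕ) :
    ∑ j ∈ Icc 1 (4*q), f j = ∑ a ∈ Icc 1 4, ∑ b ∈ Icc 1 q, f (q*(a-1)+b) := by
  rw [← Finset.sum_product']
  refine Finset.sum_nbij' (fun j => ((j-1)/q+1, (j-1)%q+1)) (fun p => q*(p.1-1)+p.2)
    ?_ ?_ ?_ ?_ ?_
  · intro j hj
    simp only [mem_Icc] at hj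
    simp only [Finset.mem_product, mem_Icc]
    have h1 : (j-1)/q < 4 := Nat.div_lt_iff_lt_mul hq |>.2 (by omega)
    have h2 : (j-1) % q < q := Nat.mod_lt _ hq
    generalize (j-1)/q = d at h1 ⊢
    omega
  · intro p hp
    simp only [Finset.mem_product, mem_Icc] at hp
    simp only [mem_Icc]
    have h1 : q*(p.1-1) ≤ q*3 := Nat.mul_le_mul_left q (by omega)
    omega
  · intro j hj
    simp only [mem_Icc] at hj
    show q*((j-1)/q+1-1) + ((j-1)%q+1) = j
    have h := Nat.mod_add_div (j-1) q
    simp only [Nat.add_sub_cancel]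
    omega
  · intro p hp
    simp only [Finset.mem_product, mem_Icc] at hp
    show ((q*(p.1-1)+p.2-1)/q+1, (q*(p.1-1)+p.2-1)%q+1) = p
    have h := dec_comp hq hp.1.1 hp.2.1 hp.2.2
    rw [h.1, h.2]
  · intro j hj
    simp only [mem_Icc] at hj
    show f j = f (q*((j-1)/q+1-1) + ((j-1)%q+1))
    congr 1
    have h := Nat.mod_add_div (j-1) q
    simp only [Nat.add_sub_cancel]
    omega

lemma weaving_comp {q a b a' b' : ℕ} (hq : 0 < q) (ha1 : 1 ≤ a) (hb1 : 1 ≤ b)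
    (hb2 : b ≤ q) (ha1' : 1 ≤ a') (hb1' : 1 ≤ b') (hb2' : b' ≤ q) :
    weaving q (q*(a-1)+b) (q*(a'-1)+b')
      = (baseSq a a' - 1) * q^2 + littleSq q ((a'+4-a)%4) b b' := by
  have h1 := dec_comp hq ha1 hb1 hb2
  have h2 := dec_comp hq ha1' hb1' hb2'
  simp only [weaving, h1.1, h1.2, h2.1, h2.2]

lemma Bmem : ∀ x ∈ Icc (1:ℕ) 4, ∀ y ∈ Icc (1:ℕ) 4, baseSq x y ∈ Icc 1 16 := by decide
lemma Binj : ∀ x₁ ∈ Icc (1:ℕ) 4, ∀ y₁ ∈ Icc (1:ℕ) 4, ∀ x₂ ∈ Icc (1:ℕ) 4,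
    ∀ y₂ ∈ Icc (1:ℕ) 4, baseSq x₁ y₁ = baseSq x₂ y₂ → x₁ = x₂ ∧ y₁ = y₂ := by decide
lemma Bsurj : ∀ v ∈ Icc (1:ℕ) 16, ∃ x ∈ Icc (1:ℕ) 4, ∃ y ∈ Icc (1:ℕ) 4,
    baseSq x y = v := by decide
lemma Brow : ∀ x ∈ Icc (1:ℕ) 4, ∑ y ∈ Icc (1:ℕ) 4, (baseSq x y - 1) = 30 := by decide
lemma Bcol : ∀ y ∈ Icc (1:ℕ) 4, ∑ x ∈ Icc (1:ℕ) 4, (baseSq x y - 1) = 30 := by decide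

lemma little_bounds {q k i j : ℕ} (hq : 0 < q) (hi1 : 1 ≤ i) (hi2 : i ≤ q)
    (hj1 : 1 ≤ j) (hj2 : j ≤ q) :
    1 ≤ littleSq q k i j ∧ littleSq q k i j ≤ q^2 := by
  have e : q^2 = q*q := sq q
  have h0 : q*(i-1) ≤ q*(q-1) := Nat.mul_le_mul_left q (by omega)
  have h1 : q*(q-j) ≤ q*(q-1) := Nat.mul_le_mul_left q (by omega)
  have h2 : q*(q-i) ≤ q*(q-1) := Nat.mul_le_mul_left q (by omega)
  have h3 : q*(j-1) ≤ q*(q-1) := Nat.mul_le_mul_left q (by omega)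
  have h4 : q*(q-1) + q = q*q := by
    have : q - 1 + 1 = q := by omega
    calc q*(q-1)+q = q*(q-1+1) := by ring
    _ = q*q := by rw [this]
  match k with
  | 0 => simp only [littleSq]; omega
  | 1 => simp only [littleSq]; omega
  | 2 => simp only [littleSq]; omega
  | (n+3) => simp only [littleSq]; omega

lemma little_inj {q k i j i' j' : ℕ} (hq : 0 < q) (hk : k < 4)
    (hi1 : 1 ≤ i) (hi2 : i ≤ q) (hj1 : 1 ≤ j) (hj2 : j ≤ q)
    (hi1' : 1 ≤ i') (hi2' : i' ≤ q) (hj1' : 1 ≤ j') (hj2' : j' ≤ q)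
    (h : littleSq q k i j = littleSq q k i' j') : i = i' ∧ j = j' := by
  interval_cases k
  · simp only [littleSq] at h
    have h' : q*(i-1)+(j-1) = q*(i'-1)+(j'-1) := by omega
    have := unique_div (by omega) (by omega) h'
    omega
  · simp only [littleSq] at h
    have h' : q*(q-j)+(i-1) = q*(q-j')+(i'-1) := by omega
    have := unique_div (by omega) (by omega) h'
    omega
  · simp only [littleSq] at h
    have h' : q*(q-i)+(q-j) = q*(q-i')+(q-j') := by omega
    have := unique_div (by omega) (by omega) h'
    omega
  · simp only [littleSq] at h
    have h' : q*(j-1)+(q-i) = q*(j'-1)+(q-i') := by omega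
    have := unique_div (by omega) (by omega) h'
    omega

lemma little_surj {q k s t : ℕ} (hq : 0 < q) (hk : k < 4) (hs : s < q) (ht : t < q) :
    ∃ i j, 1 ≤ i ∧ i ≤ q ∧ 1 ≤ j ∧ j ≤ q ∧ littleSq q k i j = q*s+t+1 := by
  interval_cases k
  · exact ⟨s+1, t+1, by omega, by omega, by omega, by omega, by
      simp only [littleSq, Nat.add_sub_cancel]; omega⟩
  · refine ⟨t+1, q-s, by omega, by omega, by omega, by omega, ?_⟩
    simp only [littleSq]
    have h1 : q - (q-s) = s := by omega
    rw [h1]; omega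
  · refine ⟨q-s, q-t, by omega, by omega, by omega, by omega, ?_⟩
    simp only [littleSq]
    have h1 : q - (q-s) = s := by omega
    rw [h1]; omega
  · refine ⟨q-t, s+1, by omega, by omega, by omega, by omega, ?_⟩
    simp only [littleSq]
    have h1 : s + 1 - 1 = s := by omega
    rw [h1]; omega

lemma four_sum {q i j : ℕ} (hq : 0 < q) (hi1 : 1 ≤ i) (hi2 : i ≤ q)
    (hj1 : 1 ≤ j) (hj2 : j ≤ q) :
    ∑ k ∈ range 4, littleSq q k i j = 2*q^2 + 2 := by
  rw [Finset.sum_range_succ, Finset.sum_range_succ, Finset.sum_range_succ,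
    Finset.sum_range_succ, Finset.sum_range_zero]
  simp only [littleSq]
  have e : q^2 = q*q := sq q
  have h : (i-1)+(q-j)+(q-i)+(j-1) = 2*q-2 := by omega
  have h2 : q*(i-1)+q*(q-j)+q*(q-i)+q*(j-1) = q*(2*q-2) := by
    rw [← h]; ring
  have h3 : q*(2*q-2) + 2*q = 2*(q*q) := by
    have : 2*q-2+2 = 2*q := by omega
    calc q*(2*q-2)+2*q = q*(2*q-2+2) := by ring
    _ = q*(2*q) := by rw [this]
    _ = 2*(q*q) := by ring
  omega

lemma rot_row {q : ℕ} (a0 : ℕ) (h1 : 1 ≤ a0) (h2 : a0 ≤ 4) (i j : ℕ) :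
    ∑ a ∈ Icc 1 4, littleSq q ((a+4-a0)%4) i j = ∑ k ∈ range 4, littleSq q k i j := by
  rw [sum_Icc14, Finset.sum_range_succ, Finset.sum_range_succ, Finset.sum_range_succ,
    Finset.sum_range_succ, Finset.sum_range_zero]
  interval_cases a0 <;> norm_num <;> omega

lemma rot_col {q : ℕ} (a0 : ℕ) (h1 : 1 ≤ a0) (h2 : a0 ≤ 4) (i j : ℕ) :
    ∑ a ∈ Icc 1 4, littleSq q ((a0+4-a)%4) i j = ∑ k ∈ range 4, littleSq q k i j := by
  rw [sum_Icc14, Finset.sum_range_succ, Finset.sum_range_succ, Finset.sum_range_succ,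
    Finset.sum_range_succ, Finset.sum_range_zero]
  interval_cases a0 <;> norm_num <;> omega


lemma index_decomp {q i : ℕ} (hq : 0 < q) (h1 : 1 ≤ i) (h2 : i ≤ 4*q) :
    ∃ a b, 1 ≤ a ∧ a ≤ 4 ∧ 1 ≤ b ∧ b ≤ q ∧ i = q*(a-1)+b := by
  have h4 : (i-1)%q < q := Nat.mod_lt _ hq
  have h3 : (i-1)/q < 4 := Nat.div_lt_iff_lt_mul hq |>.2 (by omega)
  have h5 := Nat.mod_add_div (i-1) q
  obtain ⟨d, hd⟩ : ∃ d, d = (i-1)/q := ⟨_, rfl⟩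
  obtain ⟨m, hm⟩ : ∃ m, m = (i-1)%q := ⟨_, rfl⟩
  rw [← hd] at h3 h5
  rw [← hm] at h4 h5
  exact ⟨d+1, m+1, by omega, by omega, by omega, by omega, by
    simp only [Nat.add_sub_cancel]; omega⟩

lemma row_sum {q i : ℕ} (hq : 0 < q) (h1 : 1 ≤ i) (h2 : i ≤ 4*q) :
    ∑ j ∈ Icc 1 (4*q), weaving q i j = 32*q^3 + 2*q := by
  obtain ⟨a0, b0, ha1, ha4, hb1, hbq, hieq⟩ := index_decomp hq h1 h2
  rw [sum_reindex hq]
  have step1 : ∑ a ∈ Icc 1 4, ∑ b ∈ Icc 1 q, weaving q i (q*(a-1)+b)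
      = ∑ a ∈ Icc 1 4, ∑ b ∈ Icc 1 q,
        ((baseSq a0 a - 1)*q^2 + littleSq q ((a+4-a0)%4) b0 b) := by
    refine Finset.sum_congr rfl fun a ha => Finset.sum_congr rfl fun b hb => ?_
    simp only [mem_Icc] at ha hb
    rw [hieq]
    exact weaving_comp hq ha1 hb1 hbq ha.1 hb.1 hb.2
  rw [step1]
  have step2 : ∀ a ∈ Icc (1:ℕ) 4,
      ∑ b ∈ Icc 1 q, ((baseSq a0 a - 1)*q^2 + littleSq q ((a+4-a0)%4) b0 b)
      = q^3*(baseSq a0 a - 1) + ∑ b ∈ Icc 1 q, littleSq q ((a+4-a0)%4) b0 b := by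
    intro a _
    rw [Finset.sum_add_distrib, Finset.sum_const, Nat.card_Icc]
    congr 1
    simp only [smul_eq_mul]
    have : q + 1 - 1 = q := by omega
    rw [this]; ring
  rw [Finset.sum_congr rfl step2, Finset.sum_add_distrib, ← Finset.mul_sum,
    Brow a0 (by simp only [mem_Icc]; omega), Finset.sum_comm]
  have step3 : ∀ b ∈ Icc 1 q,
      ∑ a ∈ Icc 1 4, littleSq q ((a+4-a0)%4) b0 b = 2*q^2+2 := by
    intro b hb
    simp only [mem_Icc] at hb
    rw [rot_row a0 ha1 ha4, four_sum hq hb1 hbq hb.1 hb.2]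
  rw [Finset.sum_congr rfl step3, Finset.sum_const, Nat.card_Icc]
  simp only [smul_eq_mul]
  have : q + 1 - 1 = q := by omega
  rw [this]; ring

lemma col_sum {q i : ℕ} (hq : 0 < q) (h1 : 1 ≤ i) (h2 : i ≤ 4*q) :
    ∑ j ∈ Icc 1 (4*q), weaving q j i = 32*q^3 + 2*q := by
  obtain ⟨a0, b0, ha1, ha4, hb1, hbq, hieq⟩ := index_decomp hq h1 h2
  rw [sum_reindex hq]
  have step1 : ∑ a ∈ Icc 1 4, ∑ b ∈ Icc 1 q, weaving q (q*(a-1)+b) i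
      = ∑ a ∈ Icc 1 4, ∑ b ∈ Icc 1 q,
        ((baseSq a a0 - 1)*q^2 + littleSq q ((a0+4-a)%4) b b0) := by
    refine Finset.sum_congr rfl fun a ha => Finset.sum_congr rfl fun b hb => ?_
    simp only [mem_Icc] at ha hb
    rw [hieq]
    exact weaving_comp hq ha.1 hb.1 hb.2 ha1 hb1 hbq
  rw [step1]
  have step2 : ∀ a ∈ Icc (1:ℕ) 4,
      ∑ b ∈ Icc 1 q, ((baseSq a a0 - 1)*q^2 + littleSq q ((a0+4-a)%4) b b0)
      = q^3*(baseSq a a0 - 1) + ∑ b ∈ Icc 1 q, littleSq q ((a0+4-a)%4) b b0 := by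
    intro a _
    rw [Finset.sum_add_distrib, Finset.sum_const, Nat.card_Icc]
    congr 1
    simp only [smul_eq_mul]
    have : q + 1 - 1 = q := by omega
    rw [this]; ring
  rw [Finset.sum_congr rfl step2, Finset.sum_add_distrib, ← Finset.mul_sum,
    Bcol a0 (by simp only [mem_Icc]; omega), Finset.sum_comm]
  have step3 : ∀ b ∈ Icc 1 q,
      ∑ a ∈ Icc 1 4, littleSq q ((a0+4-a)%4) b b0 = 2*q^2+2 := by
    intro b hb
    simp only [mem_Icc] at hb
    rw [rot_col a0 ha1 ha4, four_sum hq hb.1 hb.2 hb1 hbq]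
  rw [Finset.sum_congr rfl step3, Finset.sum_const, Nat.card_Icc]
  simp only [smul_eq_mul]
  have : q + 1 - 1 = q := by omega
  rw [this]; ring

end WeavingProof

open WeavingProof in
theorem stmt11 (q : ℕ) (hq : 0 < q) :
    Set.BijOn (fun x : ℕ × ℕ => Weaving.weaving q x.1 x.2)
      (Set.Icc 1 (4 * q) ×ˢ Set.Icc 1 (4 * q)) (Set.Icc 1 (16 * q ^ 2)) ∧
    (∀ i ∈ Finset.Icc 1 (4 * q),
      (∑ j ∈ Finset.Icc 1 (4 * q), Weaving.weaving q i j) = 32 * q ^ 3 + 2 * q ∧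
      (∑ j ∈ Finset.Icc 1 (4 * q), Weaving.weaving q j i) = 32 * q ^ 3 + 2 * q) := by
  have hq2 : 0 < q^2 := pow_pos hq 2
  have hq2' : q^2 = q*q := sq q
  constructor
  · refine ⟨?_, ?_, ?_⟩
    · -- MapsTo
      rintro ⟨i, j⟩ hx
      simp only [Set.mem_prod, Set.mem_Icc] at hx
      obtain ⟨a, b, ha1, ha4, hb1, hbq, hieq⟩ := index_decomp hq hx.1.1 hx.1.2
      obtain ⟨a', b', ha1', ha4', hb1', hbq', hjeq⟩ := index_decomp hq hx.2.1 hx.2.2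
      simp only [Set.mem_Icc]
      rw [hieq, hjeq, weaving_comp hq ha1 hb1 hbq ha1' hb1' hbq']
      have hB := Bmem a (by simp only [Finset.mem_Icc]; omega)
        a' (by simp only [Finset.mem_Icc]; omega)
      simp only [Finset.mem_Icc] at hB
      have hL := little_bounds (k := (a'+4-a)%4) hq hb1 hbq hb1' hbq'
      have hm : (Weaving.baseSq a a' - 1) * q^2 ≤ 15 * q^2 :=
        Nat.mul_le_mul_right (q^2) (by omega)
      omega
    · -- InjOn
      rintro ⟨i, j⟩ hx ⟨i', j'⟩ hy h
      simp only [Set.mem_prod, Set.mem_Icc] at hx hy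
      obtain ⟨a, b, ha1, ha4, hb1, hbq, hieq⟩ := index_decomp hq hx.1.1 hx.1.2
      obtain ⟨a', b', ha1', ha4', hb1', hbq', hjeq⟩ := index_decomp hq hx.2.1 hx.2.2
      obtain ⟨c, d, hc1, hc4, hd1, hdq, hieq'⟩ := index_decomp hq hy.1.1 hy.1.2
      obtain ⟨c', d', hc1', hc4', hd1', hdq', hjeq'⟩ := index_decomp hq hy.2.1 hy.2.2
      simp only [hieq, hjeq, hieq', hjeq',
        weaving_comp hq ha1 hb1 hbq ha1' hb1' hbq',
        weaving_comp hq hc1 hd1 hdq hc1' hd1' hdq'] at h ⊢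
      have hB1 := Bmem a (by simp only [Finset.mem_Icc]; omega)
        a' (by simp only [Finset.mem_Icc]; omega)
      have hB2 := Bmem c (by simp only [Finset.mem_Icc]; omega)
        c' (by simp only [Finset.mem_Icc]; omega)
      simp only [Finset.mem_Icc] at hB1 hB2
      have hL1 := little_bounds (k := (a'+4-a)%4) hq hb1 hbq hb1' hbq'
      have hL2 := little_bounds (k := (c'+4-c)%4) hq hd1 hdq hd1' hdq'
      have m1 : (Weaving.baseSq a a' - 1) * q^2 = q^2 * (Weaving.baseSq a a' - 1) :=
        mul_comm _ _
      have m2 : (Weaving.baseSq c c' - 1) * q^2 = q^2 * (Weaving.baseSq c c' - 1) :=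
        mul_comm _ _
      have key : q^2 * (Weaving.baseSq a a' - 1) + (Weaving.littleSq q ((a'+4-a)%4) b b' - 1)
          = q^2 * (Weaving.baseSq c c' - 1) + (Weaving.littleSq q ((c'+4-c)%4) d d' - 1) := by
        omega
      obtain ⟨e1, e2⟩ := unique_div (by omega) (by omega) key
      have hBeq : Weaving.baseSq a a' = Weaving.baseSq c c' := by omega
      obtain ⟨hac, hac'⟩ := Binj a (by simp only [Finset.mem_Icc]; omega)
        a' (by simp only [Finset.mem_Icc]; omega)
        c (by simp only [Finset.mem_Icc]; omega)
        c' (by simp only [Finset.mem_Icc]; omega) hBeq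
      subst hac; subst hac'
      have hLeq : Weaving.littleSq q ((a'+4-a)%4) b b'
          = Weaving.littleSq q ((a'+4-a)%4) d d' := by omega
      obtain ⟨hbd, hbd'⟩ := little_inj hq (Nat.mod_lt _ (by norm_num))
        hb1 hbq hb1' hbq' hd1 hdq hd1' hdq' hLeq
      subst hbd; subst hbd'
      rfl
    · -- SurjOn
      intro y hy
      simp only [Set.mem_Icc] at hy
      have h4 : (y-1) % q^2 < q^2 := Nat.mod_lt _ hq2
      have h3 : (y-1) / q^2 < 16 := Nat.div_lt_iff_lt_mul hq2 |>.2 (by omega)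
      have h5 := Nat.mod_add_div (y-1) (q^2)
      obtain ⟨c, hc⟩ : ∃ c, c = (y-1)/q^2 := ⟨_, rfl⟩
      obtain ⟨r, hr⟩ : ∃ r, r = (y-1)%q^2 := ⟨_, rfl⟩
      rw [← hc] at h3 h5
      rw [← hr] at h4 h5
      obtain ⟨a, ha, a', ha', hB⟩ := Bsurj (c+1) (by simp only [Finset.mem_Icc]; omega)
      simp only [Finset.mem_Icc] at ha ha'
      have hsq : r % q < q := Nat.mod_lt _ hq
      have hsd : r / q < q := Nat.div_lt_iff_lt_mul hq |>.2 (by omega)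
      have hst := Nat.mod_add_div r q
      obtain ⟨s, hs⟩ : ∃ s, s = r/q := ⟨_, rfl⟩
      obtain ⟨t, ht⟩ : ∃ t, t = r%q := ⟨_, rfl⟩
      rw [← hs] at hsd hst
      rw [← ht] at hsq hst
      obtain ⟨b, b', hb1, hbq, hb1', hbq', hL⟩ :=
        little_surj (k := (a'+4-a)%4) hq (Nat.mod_lt _ (by norm_num)) hsd hsq
      refine ⟨(q*(a-1)+b, q*(a'-1)+b'), ?_, ?_⟩
      · simp only [Set.mem_prod, Set.mem_Icc]
        have m1 : q*(a-1) ≤ q*3 := Nat.mul_le_mul_left q (by omega)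
        have m2 : q*(a'-1) ≤ q*3 := Nat.mul_le_mul_left q (by omega)
        omega
      · show Weaving.weaving q (q*(a-1)+b) (q*(a'-1)+b') = y
        rw [weaving_comp hq ha.1 hb1 hbq ha'.1 hb1' hbq', hB, hL,
          Nat.add_sub_cancel]
        have m1 : c * q^2 = q^2 * c := mul_comm _ _
        omega
  · intro i hi
    simp only [Finset.mem_Icc] at hi
    exact ⟨row_sum hq hi.1 hi.2, col_sum hq hi.1 hi.2⟩
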